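/- In the affine nilTemperley-Lieb algebra n\widehat{TL}_n, the elements z_i = \tilde{e}_i^n \cdot \tilde{h}_{n-i}^n for 1 \le i \le n-1 are central. -/

import Mathlib

open scoped BigOperators

namespace NilTL

/-- The defining relations of the affine nilTemperley-Lieb algebra on `n` generators:
`aᵢ² = 0`, `aᵢaⱼ = aⱼaᵢ` when `i` and `j` are not cyclically adjacent mod `n`, and
`aᵢa_{i+1}aᵢ = a_{i+1}aᵢa_{i+1} = 0` (indices mod `n`). -/
inductive TLRel (n : ℕ) [NeZero n] :
    FreeAlgebra ℤ (Fin n) → FreeAlgebra ℤ (Fin n) → Prop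
  | sq (i : Fin n) : TLRel n (FreeAlgebra.ι ℤ i * FreeAlgebra.ι ℤ i) 0
  | comm (i j : Fin n) (h1 : i ≠ j + 1) (h2 : j ≠ i + 1) :
      TLRel n (FreeAlgebra.ι ℤ i * FreeAlgebra.ι ℤ j)
        (FreeAlgebra.ι ℤ j * FreeAlgebra.ι ℤ i)
  | braid1 (i : Fin n) :
      TLRel n (FreeAlgebra.ι ℤ i * FreeAlgebra.ι ℤ (i + 1) * FreeAlgebra.ι ℤ i) 0
  | braid2 (i : Fin n) :
      TLRel n (FreeAlgebra.ι ℤ (i + 1) * FreeAlgebra.ι ℤ i * FreeAlgebra.ι ℤ (i + 1)) 0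

/-- The affine nilTemperley-Lieb algebra `n\widehat{TL}ₙ`. -/
abbrev TL (n : ℕ) [NeZero n] := RingQuot (TLRel n)

/-- The generators `aᵢ` of the affine nilTemperley-Lieb algebra. -/
noncomputable def a (n : ℕ) [NeZero n] (i : Fin n) : TL n :=
  RingQuot.mkAlgHom ℤ (TLRel n) (FreeAlgebra.ι ℤ i)

open Fin.NatCast

/-- A canonical "gap" of a proper subset `S ⊊ ℤ/n`: an element of the complement. -/
noncomputable def gap (n : ℕ) [NeZero n] (S : Finset (Fin n)) : Fin n :=
  if h : Sᶜ.Nonempty then Sᶜ.min' h else 0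

/-- The cyclically decreasing word on a proper subset `S ⊊ ℤ/n`: list the elements of `S`
in the cyclically decreasing order `g - 1, g - 2, …, g + 1` starting just below a gap `g ∉ S`,
so that whenever `i` and `i+1` both occur in `S`, the letter `i+1` appears before `i`. -/
noncomputable def decWord (n : ℕ) [NeZero n] (S : Finset (Fin n)) : List (Fin n) :=
  ((List.range (n - 1)).map fun (t : ℕ) => gap n S - 1 - (t : Fin n)).filter
    (fun x => decide (x ∈ S))

/-- The cyclically increasing word on a proper subset `S ⊊ ℤ/n`. -/
noncomputable def incWord (n : ℕ) [NeZero n] (S : Finset (Fin n)) : List (Fin n) :=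
  ((List.range (n - 1)).map fun (t : ℕ) => gap n S + 1 + (t : Fin n)).filter
    (fun x => decide (x ∈ S))

/-- `h̃ᵣⁿ`, the sum of all cyclically decreasing monomials of length `r` (for `1 ≤ r ≤ n-1`,
these are indexed by the subsets of `ℤ/n` of size `r`). -/
noncomputable def hh (n : ℕ) [NeZero n] (r : ℕ) : TL n :=
  ∑ S ∈ Finset.powersetCard r (Finset.univ : Finset (Fin n)),
    ((decWord n S).map (a n)).prod

/-- `ẽᵣⁿ`, the sum of all cyclically increasing monomials of length `r`. -/
noncomputable def ee (n : ℕ) [NeZero n] (r : ℕ) : TL n :=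
  ∑ S ∈ Finset.powersetCard r (Finset.univ : Finset (Fin n)),
    ((incWord n S).map (a n)).prod

open Fin.CommRing

variable {n : ℕ} [NeZero n]

noncomputable def P (l : List (Fin n)) : TL n := (l.map (a n)).prod

lemma P_nil : P ([] : List (Fin n)) = 1 := rfl

lemma P_append (l1 l2 : List (Fin n)) : P (l1 ++ l2) = P l1 * P l2 := by
  simp [P]

lemma P_cons (x : Fin n) (l : List (Fin n)) : P (x :: l) = a n x * P l := by
  simp [P]

lemma P_singleton (x : Fin n) : P [x] = a n x := by simp [P]

lemma asq (u : Fin n) : a n u * a n u = 0 := by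
  have h := RingQuot.mkAlgHom_rel ℤ (TLRel.sq u)
  simpa [a, map_mul] using h

lemma abraid1 (u : Fin n) : a n u * a n (u + 1) * a n u = 0 := by
  have h := RingQuot.mkAlgHom_rel ℤ (TLRel.braid1 u)
  simpa [a, map_mul] using h

lemma abraid2 (u : Fin n) : a n (u + 1) * a n u * a n (u + 1) = 0 := by
  have h := RingQuot.mkAlgHom_rel ℤ (TLRel.braid2 u)
  simpa [a, map_mul] using h

lemma acomm {u v : Fin n} (h1 : u ≠ v + 1) (h2 : v ≠ u + 1) :
    Commute (a n u) (a n v) := by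
  have h := RingQuot.mkAlgHom_rel ℤ (TLRel.comm u v h1 h2)
  simpa [a, map_mul, Commute, SemiconjBy] using h

lemma P_comm_of (u : Fin n) (l : List (Fin n))
    (h : ∀ c ∈ l, Commute (a n u) (a n c)) : Commute (a n u) (P l) := by
  apply Commute.list_prod_right
  intro x hx
  obtain ⟨c, hc, rfl⟩ := List.mem_map.mp hx
  exact h c hc

lemma P_comm_lists {l1 l2 : List (Fin n)}
    (h : ∀ x ∈ l1, ∀ y ∈ l2, Commute (a n x) (a n y)) : Commute (P l1) (P l2) := by
  apply Commute.list_prod_right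
  intro x hx
  obtain ⟨c, hc, rfl⟩ := List.mem_map.mp hx
  exact (P_comm_of c l1 (fun d hd => (h d hd c hc).symm)).symm

lemma core_zero (u : Fin n) (t : List (Fin n)) (ht : t = [] ∨ ∃ v, t = [v]) :
    a n u * P t * a n u = 0 := by
  rcases ht with rfl | ⟨v, rfl⟩
  · rw [P_nil, mul_one, asq]
  · rw [P_singleton]
    by_cases hv1 : v = u + 1
    · subst hv1; exact abraid1 u
    by_cases hv2 : u = v + 1
    · rw [hv2]; exact abraid2 v
    · have h := (acomm hv2 hv1).eq
      rw [mul_assoc, ← h, ← mul_assoc, asq, zero_mul]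

/-- the key "sandwich" zero lemma -/
lemma sandwich (u : Fin n) (x m1 t m2 y : List (Fin n))
    (ht : t = [] ∨ ∃ v, t = [v])
    (hc : ∀ c, (c ∈ m1 ∨ c ∈ m2) → Commute (a n u) (a n c)) :
    P (x ++ [u] ++ m1 ++ t ++ m2 ++ [u] ++ y) = 0 := by
  have h1 := (P_comm_of u m1 (fun c hc' => hc c (Or.inl hc'))).eq
  have h2 := (P_comm_of u m2 (fun c hc' => hc c (Or.inr hc'))).eq
  have core := core_zero u t ht
  have key : a n u * (P m1 * (P t * (P m2 * (a n u * P y)))) = 0 := by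
    calc a n u * (P m1 * (P t * (P m2 * (a n u * P y))))
        = P m1 * (a n u * (P t * (P m2 * (a n u * P y)))) := by
          rw [← mul_assoc, h1, mul_assoc]
      _ = P m1 * (a n u * (P t * (a n u * (P m2 * P y)))) := by
          rw [show P m2 * (a n u * P y) = a n u * (P m2 * P y) by
            rw [← mul_assoc, ← h2, mul_assoc]]
      _ = P m1 * ((a n u * P t * a n u) * (P m2 * P y)) := by
          rw [mul_assoc, mul_assoc]
      _ = 0 := by rw [core, zero_mul, mul_zero]
  have expand : P (x ++ [u] ++ m1 ++ t ++ m2 ++ [u] ++ y)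
      = P x * (a n u * (P m1 * (P t * (P m2 * (a n u * P y))))) := by
    simp [P_append, P_cons, P_nil, mul_assoc]
  rw [expand, key, mul_zero]

/-! ### words with arbitrary base point -/

noncomputable def eL (c : Fin n) (S : Finset (Fin n)) (m : ℕ) : List (Fin n) :=
  ((List.range m).map fun t : ℕ => c + (t : Fin n)).filter fun x => decide (x ∈ S)

noncomputable def hL (c : Fin n) (S : Finset (Fin n)) (m : ℕ) : List (Fin n) :=
  ((List.range m).map fun t : ℕ => c - (t : Fin n)).filter fun x => decide (x ∈ S)

lemma eL_split (c : Fin n) (S : Finset (Fin n)) (k m : ℕ) :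
    eL c S (k + m) = eL c S k ++ eL (c + (k : Fin n)) S m := by
  unfold eL
  rw [List.range_add, List.map_append, List.filter_append, List.map_map]
  have hfun : ((fun t : ℕ => c + (t : Fin n)) ∘ fun x => k + x)
      = fun t : ℕ => (c + (k : Fin n)) + (t : Fin n) := by
    funext t; simp only [Function.comp]; push_cast; ring
  rw [hfun]

lemma hL_split (c : Fin n) (S : Finset (Fin n)) (k m : ℕ) :
    hL c S (k + m) = hL c S k ++ hL (c - (k : Fin n)) S m := by
  unfold hL
  rw [List.range_add, List.map_append, List.filter_append, List.map_map]
  have hfun : ((fun t : ℕ => c - (t : Fin n)) ∘ fun x => k + x)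
      = fun t : ℕ => (c - (k : Fin n)) - (t : Fin n) := by
    funext t; simp only [Function.comp]; push_cast; ring
  rw [hfun]

lemma eL_one (c : Fin n) (S : Finset (Fin n)) :
    eL c S 1 = if c ∈ S then [c] else [] := by
  by_cases hc : c ∈ S <;> simp [eL, show List.range 1 = [0] from rfl, hc]

lemma hL_one (c : Fin n) (S : Finset (Fin n)) :
    hL c S 1 = if c ∈ S then [c] else [] := by
  by_cases hc : c ∈ S <;> simp [hL, show List.range 1 = [0] from rfl, hc]

lemma eL_full (c : Fin n) (S : Finset (Fin n)) (m : ℕ)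
    (h : ∀ t, t < m → c + (t : Fin n) ∈ S) :
    eL c S m = (List.range m).map fun t : ℕ => c + (t : Fin n) := by
  unfold eL
  rw [List.filter_eq_self]
  intro x hx
  obtain ⟨t, ht, rfl⟩ := List.mem_map.mp hx
  simp [h t (List.mem_range.mp ht)]

lemma hL_full (c : Fin n) (S : Finset (Fin n)) (m : ℕ)
    (h : ∀ t, t < m → c - (t : Fin n) ∈ S) :
    hL c S m = (List.range m).map fun t : ℕ => c - (t : Fin n) := by
  unfold hL
  rw [List.filter_eq_self]
  intro x hx
  obtain ⟨t, ht, rfl⟩ := List.mem_map.mp hx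
  simp [h t (List.mem_range.mp ht)]

lemma eL_mem {c : Fin n} {S : Finset (Fin n)} {m : ℕ} {x : Fin n}
    (hx : x ∈ eL c S m) : x ∈ S ∧ ∃ t, t < m ∧ x = c + (t : Fin n) := by
  obtain ⟨hx1, hx2⟩ := List.mem_filter.mp hx
  obtain ⟨t, ht, rfl⟩ := List.mem_map.mp hx1
  exact ⟨by simpa using hx2, t, List.mem_range.mp ht, rfl⟩

lemma hL_mem {c : Fin n} {S : Finset (Fin n)} {m : ℕ} {x : Fin n}
    (hx : x ∈ hL c S m) : x ∈ S ∧ ∃ t, t < m ∧ x = c - (t : Fin n) := by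
  obtain ⟨hx1, hx2⟩ := List.mem_filter.mp hx
  obtain ⟨t, ht, rfl⟩ := List.mem_map.mp hx1
  exact ⟨by simpa using hx2, t, List.mem_range.mp ht, rfl⟩

/-! ### arithmetic helpers -/

lemma cast_eq_iff {p q : ℕ} : ((p : Fin n) = (q : Fin n)) ↔ p % n = q % n := by
  rw [Fin.ext_iff, Fin.val_natCast, Fin.val_natCast]

lemma add_cast_inj (c : Fin n) {p q : ℕ} :
    c + (p : Fin n) = c + (q : Fin n) ↔ p % n = q % n := by
  rw [add_right_inj, cast_eq_iff]

lemma natCast_n : ((n : ℕ) : Fin n) = 0 := by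
  simp [Fin.ext_iff, Fin.val_natCast]

lemma sub_eq_add (c : Fin n) (q : ℕ) (h : q ≤ n) :
    c - (q : Fin n) = c + ((n - q : ℕ) : Fin n) := by
  rw [Nat.cast_sub h, natCast_n]
  ring

lemma acomm_base (c : Fin n) {p q : ℕ} (h1 : (p + 1) % n ≠ q % n)
    (h2 : (q + 1) % n ≠ p % n) :
    Commute (a n (c + (p : Fin n))) (a n (c + (q : Fin n))) := by
  apply acomm
  · intro h
    apply h2
    rw [show c + (q : Fin n) + 1 = c + ((q + 1 : ℕ) : Fin n) by push_cast; ring] at h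
    exact ((add_cast_inj c).mp h).symm
  · intro h
    apply h1
    rw [show c + (p : Fin n) + 1 = c + ((p + 1 : ℕ) : Fin n) by push_cast; ring] at h
    exact ((add_cast_inj c).mp h).symm

lemma modNe {p q : ℕ} (hp : p < n) (hq : q < n) (h : p ≠ q) : p % n ≠ q % n := by
  rw [Nat.mod_eq_of_lt hp, Nat.mod_eq_of_lt hq]; exact h

lemma modNe' {p q : ℕ} (hp0 : 0 < p) (hp : p < n) (hq : q = n) : p % n ≠ q % n := by
  rw [Nat.mod_eq_of_lt hp, hq, Nat.mod_self]; omega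

lemma P_swap {A B : List (Fin n)}
    (h : ∀ x ∈ A, ∀ y ∈ B, Commute (a n x) (a n y)) : P (A ++ B) = P (B ++ A) := by
  rw [P_append, P_append, (P_comm_lists h).eq]

/-! ### gap independence -/

lemma eL_gap {S : Finset (Fin n)} {g g' : Fin n} (hg : g ∉ S) (hg' : g' ∉ S) :
    P (eL (g + 1) S (n - 1)) = P (eL (g' + 1) S (n - 1)) := by
  by_cases hd0 : (g' - g).val = 0
  · have : g' - g = 0 := by
      rw [← Fin.cast_val_eq_self (g' - g), hd0, Nat.cast_zero]
    rw [sub_eq_zero.mp this]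
  set d := (g' - g).val with hd
  clear_value d
  have hdn : d < n := hd ▸ (g' - g).isLt
  have hd1 : 1 ≤ d := Nat.one_le_iff_ne_zero.mpr hd0
  have hn1 : 1 ≤ n := Nat.one_le_iff_ne_zero.mpr (NeZero.ne n)
  have hdcast : ((d : ℕ) : Fin n) = g' - g := by rw [hd, Fin.cast_val_eq_self]
  have hbase1 : (g + 1) + ((d - 1 : ℕ) : Fin n) = g' := by
    rw [Nat.cast_sub hd1, hdcast]; push_cast; ring
  have hbase3 : (g' + 1) + ((n - 1 - d : ℕ) : Fin n) = g := by
    rw [Nat.cast_sub (by omega : d ≤ n - 1), Nat.cast_sub hn1, natCast_n, hdcast]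
    push_cast; ring
  have h1 := eL_split (g + 1) S (d - 1) (1 + (n - 1 - d))
  rw [show d - 1 + (1 + (n - 1 - d)) = n - 1 by omega, hbase1] at h1
  have h2 := eL_split g' S 1 (n - 1 - d)
  rw [Nat.cast_one] at h2
  have h3 := eL_split (g' + 1) S (n - 1 - d) (1 + (d - 1))
  rw [show n - 1 - d + (1 + (d - 1)) = n - 1 by omega, hbase3] at h3
  have h4 := eL_split g S 1 (d - 1)
  rw [Nat.cast_one] at h4
  rw [h1, h2, h3, h4, eL_one, eL_one, if_neg hg, if_neg hg', List.nil_append,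
    List.nil_append]
  apply P_swap
  intro x hx y hy
  obtain ⟨hxS, t1, ht1, rfl⟩ := eL_mem hx
  obtain ⟨hyS, t2, ht2, rfl⟩ := eL_mem hy
  rw [show (g + 1) + (t1 : Fin n) = g + ((1 + t1 : ℕ) : Fin n) by push_cast; ring,
      show (g' + 1) + (t2 : Fin n) = g + ((d + 1 + t2 : ℕ) : Fin n) by
        rw [Nat.cast_add, Nat.cast_add, hdcast]; push_cast; ring]
  clear hx hy hxS hyS h1 h2 h3 h4 hbase1 hbase3 hdcast hd hg hg'
  refine acomm_base g (p := 1 + t1) (q := d + 1 + t2) ?_ ?_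
  · refine modNe ?_ ?_ ?_ <;> omega
  · rcases Nat.lt_or_ge (d + 1 + t2 + 1) n with hlt | hge
    · refine modNe hlt ?_ ?_ <;> omega
    · exact (modNe' (by omega) (by omega) (by omega)).symm

lemma hL_gap {S : Finset (Fin n)} {g g' : Fin n} (hg : g ∉ S) (hg' : g' ∉ S) :
    P (hL (g - 1) S (n - 1)) = P (hL (g' - 1) S (n - 1)) := by
  by_cases hd0 : (g - g').val = 0
  · have : g - g' = 0 := by
      rw [← Fin.cast_val_eq_self (g - g'), hd0, Nat.cast_zero]
    rw [sub_eq_zero.mp this]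
  set d := (g - g').val with hd
  clear_value d
  have hdn : d < n := hd ▸ (g - g').isLt
  have hd1 : 1 ≤ d := Nat.one_le_iff_ne_zero.mpr hd0
  have hn1 : 1 ≤ n := Nat.one_le_iff_ne_zero.mpr (NeZero.ne n)
  have hdcast : ((d : ℕ) : Fin n) = g - g' := by rw [hd, Fin.cast_val_eq_self]
  have hbase1 : (g - 1) - ((d - 1 : ℕ) : Fin n) = g' := by
    rw [Nat.cast_sub hd1, hdcast]; push_cast; ring
  have hbase3 : (g' - 1) - ((n - 1 - d : ℕ) : Fin n) = g := by
    rw [Nat.cast_sub (by omega : d ≤ n - 1), Nat.cast_sub hn1, natCast_n, hdcast]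
    push_cast; ring
  have h1 := hL_split (g - 1) S (d - 1) (1 + (n - 1 - d))
  rw [show d - 1 + (1 + (n - 1 - d)) = n - 1 by omega, hbase1] at h1
  have h2 := hL_split g' S 1 (n - 1 - d)
  rw [Nat.cast_one] at h2
  have h3 := hL_split (g' - 1) S (n - 1 - d) (1 + (d - 1))
  rw [show n - 1 - d + (1 + (d - 1)) = n - 1 by omega, hbase3] at h3
  have h4 := hL_split g S 1 (d - 1)
  rw [Nat.cast_one] at h4
  rw [h1, h2, h3, h4, hL_one, hL_one, if_neg hg, if_neg hg', List.nil_append,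
    List.nil_append]
  apply P_swap
  intro x hx y hy
  obtain ⟨hxS, t1, ht1, rfl⟩ := hL_mem hx
  obtain ⟨hyS, t2, ht2, rfl⟩ := hL_mem hy
  rw [show (g - 1) - (t1 : Fin n) = g - ((1 + t1 : ℕ) : Fin n) by push_cast; ring,
      show (g' - 1) - (t2 : Fin n) = g - ((d + 1 + t2 : ℕ) : Fin n) by
        rw [Nat.cast_add, Nat.cast_add, hdcast]; push_cast; ring,
      sub_eq_add g (1 + t1) (by omega), sub_eq_add g (d + 1 + t2) (by omega)]
  clear hx hy hxS hyS h1 h2 h3 h4 hbase1 hbase3 hdcast hd hg hg'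
  refine acomm_base g (p := n - (1 + t1)) (q := n - (d + 1 + t2)) ?_ ?_
  · rcases Nat.lt_or_ge (n - (1 + t1) + 1) n with hlt | hge
    · refine modNe hlt ?_ ?_ <;> omega
    · exact (modNe' (by omega) (by omega) (by omega)).symm
  · refine modNe ?_ ?_ ?_ <;> omega

lemma mapcoe (f : Fin n → Fin n) (m : ℕ) :
    List.map f ((List.range m).flatMap fun a => [((a : ℕ) : Fin n)])
      = (List.range m).map (fun t : ℕ => f (t : Fin n)) := by
  induction List.range m with
  | nil => rfl
  | cons h t ih => simp_all [List.flatMap_cons]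

lemma incWord_eq (S : Finset (Fin n)) : incWord n S = eL (gap n S + 1) S (n - 1) := by
  rfl

lemma decWord_eq (S : Finset (Fin n)) : decWord n S = hL (gap n S - 1) S (n - 1) := by
  rfl

lemma gap_not_mem {S : Finset (Fin n)} (hS : S ≠ Finset.univ) : gap n S ∉ S := by
  have hne : Sᶜ.Nonempty := by
    rw [← Finset.card_pos, Finset.card_compl]
    have : S.card < Fintype.card (Fin n) := by
      apply Finset.card_lt_card
      exact Finset.ssubset_univ_iff.mpr hS
    omega
  rw [gap, dif_pos hne]
  have := Finset.min'_mem Sᶜ hne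
  simpa using this

lemma Einc {S : Finset (Fin n)} (hS : S ≠ Finset.univ) {g : Fin n} (hg : g ∉ S) :
    P (incWord n S) = P (eL (g + 1) S (n - 1)) := by
  rw [incWord_eq]
  exact eL_gap (gap_not_mem hS) hg

lemma Hdec {S : Finset (Fin n)} (hS : S ≠ Finset.univ) {g : Fin n} (hg : g ∉ S) :
    P (decWord n S) = P (hL (g - 1) S (n - 1)) := by
  rw [decWord_eq]
  exact hL_gap (gap_not_mem hS) hg

/-! ### run tops and bottoms -/

lemma exists_top {S : Finset (Fin n)} (hS : S ≠ Finset.univ) {x : Fin n} (hx : x ∈ S) :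
    ∃ p : ℕ, p + 1 < n ∧ (∀ q ≤ p, x + (q : Fin n) ∈ S) ∧ x + (p : Fin n) + 1 ∉ S := by
  have hex : ∃ m : ℕ, x + (m : Fin n) + 1 ∉ S := by
    obtain ⟨y, hy⟩ : ∃ y, y ∉ S := by
      by_contra h
      push_neg at h
      exact hS (Finset.eq_univ_iff_forall.mpr h)
    refine ⟨(y - x - 1).val, ?_⟩
    rw [Fin.cast_val_eq_self]
    rw [show x + (y - x - 1) + 1 = y by ring]
    exact hy
  set p := Nat.find hex with hp
  have hspec : x + (p : Fin n) + 1 ∉ S := Nat.find_spec hex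
  have hall : ∀ q ≤ p, x + (q : Fin n) ∈ S := by
    intro q hq
    match q with
    | 0 => simpa using hx
    | (r + 1) =>
      have hrp : r < p := by omega
      have := Nat.find_min hex hrp
      rw [not_not] at this
      rw [show ((r + 1 : ℕ) : Fin n) = (r : Fin n) + 1 by push_cast; ring, ← add_assoc]
      exact this
  refine ⟨p, ?_, hall, hspec⟩
  by_contra hbig
  apply hS
  rw [Finset.eq_univ_iff_forall]
  intro z
  have hz : (z - x).val ≤ p := by
    have := (z - x).isLt
    omega
  have := hall _ hz
  rwa [Fin.cast_val_eq_self, show x + (z - x) = z by ring] at this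

lemma exists_bot {S : Finset (Fin n)} (hS : S ≠ Finset.univ) {x : Fin n} (hx : x ∈ S) :
    ∃ p : ℕ, p + 1 < n ∧ (∀ q ≤ p, x - (q : Fin n) ∈ S) ∧ x - (p : Fin n) - 1 ∉ S := by
  have hex : ∃ m : ℕ, x - (m : Fin n) - 1 ∉ S := by
    obtain ⟨y, hy⟩ : ∃ y, y ∉ S := by
      by_contra h
      push_neg at h
      exact hS (Finset.eq_univ_iff_forall.mpr h)
    refine ⟨(x - y - 1).val, ?_⟩
    rw [Fin.cast_val_eq_self]
    rw [show x - (x - y - 1) - 1 = y by ring]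
    exact hy
  set p := Nat.find hex with hp
  have hspec : x - (p : Fin n) - 1 ∉ S := Nat.find_spec hex
  have hall : ∀ q ≤ p, x - (q : Fin n) ∈ S := by
    intro q hq
    match q with
    | 0 => simpa using hx
    | (r + 1) =>
      have hrp : r < p := by omega
      have := Nat.find_min hex hrp
      rw [not_not] at this
      rw [show ((r + 1 : ℕ) : Fin n) = (r : Fin n) + 1 by push_cast; ring, ← sub_sub]
      exact this
  refine ⟨p, ?_, hall, hspec⟩
  by_contra hbig
  apply hS
  rw [Finset.eq_univ_iff_forall]
  intro z
  have hz : (x - z).val ≤ p := by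
    have := (x - z).isLt
    omega
  have := hall _ hz
  rwa [Fin.cast_val_eq_self, show x - (x - z) = z by ring] at this

lemma sandwich' (u : Fin n) (l x m1 t m2 y : List (Fin n))
    (hl : l = x ++ [u] ++ m1 ++ t ++ m2 ++ [u] ++ y)
    (ht : t = [] ∨ ∃ v, t = [v])
    (hc : ∀ c, (c ∈ m1 ∨ c ∈ m2) → Commute (a n u) (a n c)) : P l = 0 := by
  rw [hl]; exact sandwich u x m1 t m2 y ht hc

lemma acomm_lt (c : Fin n) {p q : ℕ} (hp : p + 1 < n) (hq : q + 1 < n)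
    (h1 : p + 1 ≠ q) (h2 : q + 1 ≠ p) :
    Commute (a n (c + (p : Fin n))) (a n (c + (q : Fin n))) :=
  acomm_base c (modNe (by omega) (by omega) h1) (modNe (by omega) (by omega) h2)

lemma range_succ_head (p : ℕ) :
    List.range (p + 1) = 0 :: (List.range p).map (fun t => 1 + t) := by
  rw [show p + 1 = 1 + p by omega, List.range_add]; rfl

/-- Core vanishing: an increasing word on `S` followed by a decreasing word on `T`
vanishes as soon as `S` and `T` intersect. -/
lemma EH_zero {S T : Finset (Fin n)} (hS : S ≠ Finset.univ) (hT : T ≠ Finset.univ)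
    {x : Fin n} (hxS : x ∈ S) (hxT : x ∈ T) :
    P (incWord n S) * P (decWord n T) = 0 := by
  obtain ⟨p, hpn, hpall, hptop⟩ := exists_top hS hxS
  obtain ⟨p', hqn, hqall, hqtop⟩ := exists_top hT hxT
  rw [Einc hS hptop, Hdec hT hqtop,
    show x + (p' : Fin n) + 1 - 1 = x + (p' : Fin n) by ring]
  -- split E
  have hcast1 : ((n - 2 - p : ℕ) : Fin n) = -2 - (p : Fin n) := by
    rw [Nat.cast_sub (by omega : p ≤ n - 2), Nat.cast_sub (by omega : 2 ≤ n), natCast_n]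
    ring
  have hE := eL_split (x + (p : Fin n) + 1 + 1) S (n - 2 - p) (p + 1)
  rw [show n - 2 - p + (p + 1) = n - 1 by omega, hcast1,
      show x + (p : Fin n) + 1 + 1 + (-2 - (p : Fin n)) = x by ring] at hE
  have hR : eL x S (p + 1) = (List.range (p + 1)).map (fun t : ℕ => x + (t : Fin n)) :=
    eL_full _ _ _ (fun t ht => hpall t (by omega))
  rw [hE, hR]
  -- split H
  have hH := hL_split (x + (p' : Fin n)) T (p' + 1) (n - 2 - p')
  rw [show p' + 1 + (n - 2 - p') = n - 1 by omega,
      show (((p' + 1 : ℕ)) : Fin n) = (p' : Fin n) + 1 by push_cast; ring,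
      show x + (p' : Fin n) - ((p' : Fin n) + 1) = x - 1 by ring] at hH
  have hR' : hL (x + (p' : Fin n)) T (p' + 1)
      = (List.range (p' + 1)).map (fun t : ℕ => x + (p' : Fin n) - (t : Fin n)) := by
    apply hL_full
    intro t ht
    rw [show x + (p' : Fin n) - (t : Fin n) = x + (((p' - t : ℕ)) : Fin n) by
      rw [Nat.cast_sub (by omega : t ≤ p')]; ring]
    exact hqall _ (by omega)
  rw [hH, hR', ← P_append]
  set W1 := eL (x + (p : Fin n) + 1 + 1) S (n - 2 - p) with hW1
  set W2 := hL (x - 1) T (n - 2 - p') with hW2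
  have hHhead : (List.range (p' + 1)).map (fun t : ℕ => x + (p' : Fin n) - (t : Fin n))
      = (x + (p' : Fin n)) :: (List.range p').map
        (fun t : ℕ => x + (p' : Fin n) - ((1 + t : ℕ) : Fin n)) := by
    rw [range_succ_head, List.map_cons, List.map_map]
    congr 1
    rw [Nat.cast_zero, sub_zero]
  rcases Nat.lt_trichotomy p' p with hlt | heq | hgt
  · -- p' < p : braid around u = x + p'
    have hEdec : (List.range (p + 1)).map (fun t : ℕ => x + (t : Fin n))
        = ((List.range p').map (fun t : ℕ => x + (t : Fin n)) ++ [x + (p' : Fin n)]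
          ++ [x + ((p' + 1 : ℕ) : Fin n)])
          ++ (List.range (p - p' - 1)).map (fun t : ℕ => x + ((p' + 1 + 1 + t : ℕ) : Fin n)) := by
      rw [show p + 1 = (p' + 1 + 1) + (p - p' - 1) by omega, List.range_add,
        List.map_append, List.range_succ, List.map_append, List.range_succ,
        List.map_append, List.map_map]
      rfl
    refine sandwich' (x + (p' : Fin n)) _
      (W1 ++ (List.range p').map (fun t : ℕ => x + (t : Fin n)))
      []
      [x + ((p' + 1 : ℕ) : Fin n)]
      ((List.range (p - p' - 1)).map (fun t : ℕ => x + ((p' + 1 + 1 + t : ℕ) : Fin n)))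
      ((List.range p').map (fun t : ℕ => x + (p' : Fin n) - ((1 + t : ℕ) : Fin n)) ++ W2)
      ?_ (Or.inr ⟨_, rfl⟩) ?_
    · rw [hEdec, hHhead]
      simp [List.append_assoc]
    · rintro c (hc | hc)
      · simp at hc
      · obtain ⟨t, ht, rfl⟩ := List.mem_map.mp hc
        rw [List.mem_range] at ht
        exact acomm_lt x (by omega) (by omega) (by omega) (by omega)
  · -- p' = p : square at u = x + p
    subst heq
    have hEdec : (List.range (p' + 1)).map (fun t : ℕ => x + (t : Fin n))
        = (List.range p').map (fun t : ℕ => x + (t : Fin n)) ++ [x + (p' : Fin n)] := by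
      rw [List.range_succ, List.map_append]; rfl
    refine sandwich' (x + (p' : Fin n)) _
      (W1 ++ (List.range p').map (fun t : ℕ => x + (t : Fin n)))
      [] [] []
      ((List.range p').map (fun t : ℕ => x + (p' : Fin n) - ((1 + t : ℕ) : Fin n)) ++ W2)
      ?_ (Or.inl rfl) ?_
    · rw [hEdec, hHhead]
      simp [List.append_assoc]
    · rintro c (hc | hc) <;> simp at hc
  · -- p < p' : braid around u = x + p, inside the H run
    have hu : x + (p' : Fin n) - (((p' - p - 1 + 1 : ℕ)) : Fin n) = x + (p : Fin n) := by
      rw [show p' - p - 1 + 1 = p' - p by omega, Nat.cast_sub (by omega : p ≤ p')]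
      ring
    have hEdec : (List.range (p + 1)).map (fun t : ℕ => x + (t : Fin n))
        = (List.range p).map (fun t : ℕ => x + (t : Fin n)) ++ [x + (p : Fin n)] := by
      rw [List.range_succ, List.map_append]; rfl
    have hHdec : (List.range (p' + 1)).map (fun t : ℕ => x + (p' : Fin n) - (t : Fin n))
        = ((List.range (p' - p - 1)).map (fun t : ℕ => x + (p' : Fin n) - (t : Fin n))
          ++ [x + (p' : Fin n) - ((p' - p - 1 : ℕ) : Fin n)] ++ [x + (p : Fin n)])
          ++ (List.range p).map
            (fun t : ℕ => x + (p' : Fin n) - ((p' - p - 1 + 1 + 1 + t : ℕ) : Fin n)) := by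
      rw [show p' + 1 = (p' - p - 1 + 1 + 1) + p by omega, List.range_add,
        List.map_append, List.range_succ, List.map_append, List.range_succ,
        List.map_append, List.map_map]
      simp only [List.map_cons, List.map_nil]
      rw [hu]
      rfl
    refine sandwich' (x + (p : Fin n)) _
      (W1 ++ (List.range p).map (fun t : ℕ => x + (t : Fin n)))
      ((List.range (p' - p - 1)).map (fun t : ℕ => x + (p' : Fin n) - (t : Fin n)))
      [x + (p' : Fin n) - ((p' - p - 1 : ℕ) : Fin n)]
      []
      ((List.range p).map
        (fun t : ℕ => x + (p' : Fin n) - ((p' - p - 1 + 1 + 1 + t : ℕ) : Fin n)) ++ W2)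
      ?_ (Or.inr ⟨_, rfl⟩) ?_
    · rw [hEdec, hHdec]
      simp [List.append_assoc]
    · rintro c (hc | hc)
      swap
      · simp at hc
      · obtain ⟨t, ht, rfl⟩ := List.mem_map.mp hc
        rw [List.mem_range] at ht
        rw [show x + (p' : Fin n) - (t : Fin n) = x + ((p' - t : ℕ) : Fin n) by
          rw [Nat.cast_sub (by omega : t ≤ p')]; ring]
        exact acomm_lt x (by omega) (by omega) (by omega) (by omega)

/-! ### more helpers -/

lemma sub_cast_inj (c : Fin n) {p q : ℕ} :
    c - (p : Fin n) = c - (q : Fin n) ↔ p % n = q % n := by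
  rw [sub_right_inj, cast_eq_iff]

lemma addNat_ne {c : Fin n} {p q : ℕ} (hp : p < n) (hq : q < n) (h : p ≠ q) :
    c + (p : Fin n) ≠ c + (q : Fin n) := fun hc => (modNe hp hq h) ((add_cast_inj c).mp hc)

lemma subNat_ne {c : Fin n} {p q : ℕ} (hp : p < n) (hq : q < n) (h : p ≠ q) :
    c - (p : Fin n) ≠ c - (q : Fin n) := fun hc => (modNe hp hq h) ((sub_cast_inj c).mp hc)

lemma eL_congr {S S' : Finset (Fin n)} (c : Fin n) (m : ℕ)
    (h : ∀ t, t < m → ((c + (t : Fin n)) ∈ S ↔ (c + (t : Fin n)) ∈ S')) :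
    eL c S m = eL c S' m := by
  unfold eL
  apply List.filter_congr
  intro z hz
  obtain ⟨t, ht, rfl⟩ := List.mem_map.mp hz
  simp only [decide_eq_decide]
  exact h t (List.mem_range.mp ht)

lemma hL_congr {S S' : Finset (Fin n)} (c : Fin n) (m : ℕ)
    (h : ∀ t, t < m → ((c - (t : Fin n)) ∈ S ↔ (c - (t : Fin n)) ∈ S')) :
    hL c S m = hL c S' m := by
  unfold hL
  apply List.filter_congr
  intro z hz
  obtain ⟨t, ht, rfl⟩ := List.mem_map.mp hz
  simp only [decide_eq_decide]
  exact h t (List.mem_range.mp ht)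

lemma eL_snoc (c : Fin n) (S : Finset (Fin n)) (hn : 2 ≤ n) :
    eL c S (n - 1) = eL c S (n - 2) ++ eL (c - 2) S 1 := by
  have h := eL_split c S (n - 2) 1
  rw [show n - 2 + 1 = n - 1 by omega,
    show ((n - 2 : ℕ) : Fin n) = -2 by
      rw [Nat.cast_sub (by omega : 2 ≤ n), natCast_n]; push_cast; ring] at h
  rw [h, show c + (-2 : Fin n) = c - 2 by ring]

lemma hL_snoc (c : Fin n) (S : Finset (Fin n)) (hn : 2 ≤ n) :
    hL c S (n - 1) = hL c S (n - 2) ++ hL (c + 2) S 1 := by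
  have h := hL_split c S (n - 2) 1
  rw [show n - 2 + 1 = n - 1 by omega,
    show ((n - 2 : ℕ) : Fin n) = -2 by
      rw [Nat.cast_sub (by omega : 2 ≤ n), natCast_n]; push_cast; ring] at h
  rw [h, show c - (-2 : Fin n) = c + 2 by ring]

lemma eL_head (c : Fin n) (S : Finset (Fin n)) (hn : 2 ≤ n) :
    eL c S (n - 1) = eL c S 1 ++ eL (c + 1) S (n - 2) := by
  have h := eL_split c S 1 (n - 2)
  rw [show 1 + (n - 2) = n - 1 by omega, Nat.cast_one] at h
  exact h

lemma hL_head (c : Fin n) (S : Finset (Fin n)) (hn : 2 ≤ n) :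
    hL c S (n - 1) = hL c S 1 ++ hL (c - 1) S (n - 2) := by
  have h := hL_split c S 1 (n - 2)
  rw [show 1 + (n - 2) = n - 1 by omega, Nat.cast_one] at h
  exact h

/-! ### the commutation step -/

/-- the monomial attached to `S`. -/
noncomputable def mw (S : Finset (Fin n)) : TL n := P (incWord n S) * P (decWord n Sᶜ)

lemma comm_step {S : Finset (Fin n)} (hSu : S ≠ Finset.univ) {j : Fin n}
    (hj1 : j - 1 ∈ S) (hj2 : j ∉ S) :
    a n j * mw S = mw (insert j (S.erase (j - 1))) * a n j := by
  set S' := insert j (S.erase (j - 1)) with hS'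
  have hn2 : 2 ≤ n := by
    by_contra h
    have hpos : 0 < n := Nat.pos_of_ne_zero (NeZero.ne n)
    have hn1 : n = 1 := by omega
    apply hj2
    have : j - 1 = j := by
      subst hn1
      exact Subsingleton.elim _ _
    rwa [this] at hj1
  have hjj1 : j - 1 ≠ j := fun h => hj2 (h ▸ hj1)
  have hjS' : j ∈ S' := Finset.mem_insert_self _ _
  have hj1S' : j - 1 ∉ S' := by
    rw [hS', Finset.mem_insert]
    rintro (h | h)
    · exact hjj1 h
    · exact (Finset.mem_erase.mp h).1 rfl
  have hScu : Sᶜ ≠ Finset.univ := fun h => by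
    have := Finset.mem_univ (j - 1)
    rw [← h, Finset.mem_compl] at this
    exact this hj1
  have hS'u : S' ≠ Finset.univ := fun h => hj1S' (h ▸ Finset.mem_univ _)
  have hS'cu : S'ᶜ ≠ Finset.univ := fun h => by
    have := Finset.mem_univ j
    rw [← h, Finset.mem_compl] at this
    exact this hjS'
  have hjSc : j ∈ Sᶜ := Finset.mem_compl.mpr hj2
  have hj1Sc : j - 1 ∉ Sᶜ := fun h => (Finset.mem_compl.mp h) hj1
  have hj1S'c : j - 1 ∈ S'ᶜ := Finset.mem_compl.mpr hj1S'
  have hjS'c : j ∉ S'ᶜ := fun h => (Finset.mem_compl.mp h) hjS'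
  -- E parts
  have hE : P (incWord n S) = P (eL (j + 1) S (n - 2) ++ [j - 1]) := by
    rw [Einc hSu hj2, eL_snoc (j + 1) S hn2,
      show j + 1 - 2 = j - 1 by ring, eL_one, if_pos hj1]
  have hE' : P (incWord n S') = P ([j] ++ eL (j + 1) S' (n - 2)) := by
    rw [Einc hS'u hj1S', show j - 1 + 1 = j by ring, eL_head j S' hn2,
      eL_one, if_pos hjS']
  have hEcongr : eL (j + 1) S (n - 2) = eL (j + 1) S' (n - 2) := by
    apply eL_congr
    intro t ht
    have hzj : (j + 1) + (t : Fin n) ≠ j := by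
      rw [show (j + 1) + (t : Fin n) = j + ((1 + t : ℕ) : Fin n) by push_cast; ring]
      intro hEq
      refine addNat_ne (n := n) (c := j) (p := 1 + t) (q := 0) (by omega) (by omega) (by omega) ?_
      rw [hEq]; simp
    have hzj1 : (j + 1) + (t : Fin n) ≠ j - 1 := by
      rw [show (j + 1) + (t : Fin n) = j + ((1 + t : ℕ) : Fin n) by push_cast; ring]
      intro hEq
      refine addNat_ne (n := n) (c := j) (p := 1 + t) (q := n - 1) (by omega) (by omega) (by omega) ?_
      rw [hEq, Nat.cast_sub (by omega : 1 ≤ n), natCast_n]; ring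
    rw [hS']
    simp [Finset.mem_insert, Finset.mem_erase, hzj, hzj1]
  -- H parts
  have hH : P (decWord n Sᶜ) = P (hL (j - 2) Sᶜ (n - 2) ++ [j]) := by
    rw [Hdec hScu hj1Sc, show j - 1 - 1 = j - 2 by ring, hL_snoc (j - 2) Sᶜ hn2,
      show j - 2 + 2 = j by ring, hL_one, if_pos hjSc]
  have hH' : P (decWord n S'ᶜ) = P ([j - 1] ++ hL (j - 2) S'ᶜ (n - 2)) := by
    rw [Hdec hS'cu hjS'c, hL_head (j - 1) S'ᶜ hn2,
      show j - 1 - 1 = j - 2 by ring, hL_one, if_pos hj1S'c]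
  have hHcongr : hL (j - 2) Sᶜ (n - 2) = hL (j - 2) S'ᶜ (n - 2) := by
    apply hL_congr
    intro t ht
    have hzj : (j - 2) - (t : Fin n) ≠ j := by
      rw [show (j - 2) - (t : Fin n) = j - ((2 + t : ℕ) : Fin n) by push_cast; ring]
      intro hEq
      refine subNat_ne (n := n) (c := j) (p := 2 + t) (q := 0) (by omega) (by omega) (by omega) ?_
      rw [hEq]; simp
    have hzj1 : (j - 2) - (t : Fin n) ≠ j - 1 := by
      rw [show (j - 2) - (t : Fin n) = j - ((2 + t : ℕ) : Fin n) by push_cast; ring]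
      intro hEq
      refine subNat_ne (n := n) (c := j) (p := 2 + t) (q := 1) (by omega) (by omega) (by omega) ?_
      rw [hEq, Nat.cast_one]
    simp only [Finset.mem_compl, hS', Finset.mem_insert, Finset.mem_erase]
    constructor
    · intro h hmem
      rcases hmem with h' | h'
      · exact hzj h'
      · exact h h'.2
    · intro h hmem
      exact h (Or.inr ⟨hzj1, hmem⟩)
  -- assemble
  rw [mw, mw, hE, hE', hH, hH', hEcongr, hHcongr]
  simp only [P_append, P_singleton, mul_assoc]

lemma acomm0 (c : Fin n) {q : ℕ} (hq : q + 1 < n) (h1 : q ≠ 1) :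
    Commute (a n c) (a n (c + (q : Fin n))) := by
  have h := acomm_lt (n := n) c (p := 0) (q := q) (by omega) hq (by omega) (by omega)
  simpa using h

lemma acomm0sub (c : Fin n) {q : ℕ} (h2 : 2 ≤ q) (hq : q + 1 < n) :
    Commute (a n c) (a n (c - (q : Fin n))) := by
  rw [sub_eq_add c q (by omega)]
  exact acomm0 c (by omega) (by omega)

lemma acomm_mem {S : Finset (Fin n)} {j z : Fin n} (hz : z ∈ S) (h1 : j - 1 ∉ S)
    (h2 : j + 1 ∉ S) : Commute (a n j) (a n z) := by
  apply acomm
  · intro h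
    apply h1
    rw [show j - 1 = z from by rw [h]; ring]
    exact hz
  · intro h
    apply h2
    rw [← h]
    exact hz

lemma incWord_mem {S : Finset (Fin n)} {z : Fin n} (hz : z ∈ incWord n S) : z ∈ S := by
  rw [incWord_eq] at hz
  exact (eL_mem hz).1

lemma decWord_mem {S : Finset (Fin n)} {z : Fin n} (hz : z ∈ decWord n S) : z ∈ S := by
  rw [decWord_eq] at hz
  exact (hL_mem hz).1

lemma hn2_of {S : Finset (Fin n)} (hSu : S ≠ Finset.univ) (hSc : Sᶜ ≠ Finset.univ) :
    2 ≤ n := by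
  by_contra h
  have hpos : 0 < n := Nat.pos_of_ne_zero (NeZero.ne n)
  have hn1 : n = 1 := by omega
  obtain ⟨y, hy⟩ : ∃ y, y ∉ S := by
    by_contra hh; push_neg at hh; exact hSu (Finset.eq_univ_iff_forall.mpr hh)
  obtain ⟨z, hz⟩ : ∃ z, z ∉ Sᶜ := by
    by_contra hh; push_neg at hh; exact hSc (Finset.eq_univ_iff_forall.mpr hh)
  rw [Finset.mem_compl, not_not] at hz
  subst hn1
  exact hy (Subsingleton.elim z y ▸ hz)

/-- left vanishing: `a j · m(S) = 0` unless `j - 1 ∈ S` and `j ∉ S`. -/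
lemma left_zero {S : Finset (Fin n)} (hSu : S ≠ Finset.univ) (hSc : Sᶜ ≠ Finset.univ)
    {j : Fin n} (hj : ¬(j - 1 ∈ S ∧ j ∉ S)) :
    a n j * mw S = 0 := by
  have hn2 : 2 ≤ n := hn2_of hSu hSc
  by_cases hjS : j ∈ S
  · -- case A : j ∈ S, already a j · E(S) = 0
    have key : a n j * P (incWord n S) = 0 := by
      obtain ⟨p, hpn, hall, htop⟩ := exists_top hSu hjS
      rw [Einc hSu htop]
      have hcast1 : ((n - 2 - p : ℕ) : Fin n) = -2 - (p : Fin n) := by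
        rw [Nat.cast_sub (by omega : p ≤ n - 2), Nat.cast_sub (by omega : 2 ≤ n), natCast_n]
        ring
      have hE := eL_split (j + (p : Fin n) + 1 + 1) S (n - 2 - p) (p + 1)
      rw [show n - 2 - p + (p + 1) = n - 1 by omega, hcast1,
        show j + (p : Fin n) + 1 + 1 + (-2 - (p : Fin n)) = j by ring] at hE
      have hR : eL j S (p + 1) = (List.range (p + 1)).map (fun t : ℕ => j + (t : Fin n)) :=
        eL_full _ _ _ (fun t ht => hall t (by omega))
      have hRhead : (List.range (p + 1)).map (fun t : ℕ => j + (t : Fin n))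
          = j :: (List.range p).map (fun t : ℕ => j + ((1 + t : ℕ) : Fin n)) := by
        rw [range_succ_head, List.map_cons, List.map_map]
        congr 1
        simp
      rw [hE, hR, hRhead, ← P_cons]
      by_cases hp : p = n - 2
      · refine sandwich' j _ [] (eL (j + (p : Fin n) + 1 + 1) S (n - 2 - p)) [] []
          ((List.range p).map (fun t : ℕ => j + ((1 + t : ℕ) : Fin n))) ?_ (Or.inl rfl) ?_
        · simp [List.append_assoc]
        · rintro c (hc | hc)
          · obtain ⟨-, t, ht, -⟩ := eL_mem hc
            omega
          · simp at hc
      · have hcast2 : ((n - 3 - p : ℕ) : Fin n) = -3 - (p : Fin n) := by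
          rw [Nat.cast_sub (by omega : p ≤ n - 3), Nat.cast_sub (by omega : 3 ≤ n), natCast_n]
          ring
        have hW := eL_split (j + (p : Fin n) + 1 + 1) S (n - 3 - p) 1
        rw [show n - 3 - p + 1 = n - 2 - p by omega, hcast2,
          show j + (p : Fin n) + 1 + 1 + (-3 - (p : Fin n)) = j - 1 by ring] at hW
        rw [hW]
        refine sandwich' j _ [] (eL (j + (p : Fin n) + 1 + 1) S (n - 3 - p))
          (eL (j - 1) S 1) []
          ((List.range p).map (fun t : ℕ => j + ((1 + t : ℕ) : Fin n))) ?_ ?_ ?_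
        · simp [List.append_assoc]
        · rcases em ((j - 1) ∈ S) with h | h
          · rw [eL_one, if_pos h]; exact Or.inr ⟨_, rfl⟩
          · rw [eL_one, if_neg h]; exact Or.inl rfl
        · rintro c (hc | hc)
          · obtain ⟨hcS, t, ht, rfl⟩ := eL_mem hc
            rw [show j + (p : Fin n) + 1 + 1 + (t : Fin n)
                = j + ((p + 2 + t : ℕ) : Fin n) by push_cast; ring]
            exact acomm0 j (by omega) (by omega)
          · simp at hc
    rw [mw, ← mul_assoc, key, zero_mul]
  · have hj1S : j - 1 ∉ S := fun h => hj ⟨h, hjS⟩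
    have hjSc : j ∈ Sᶜ := Finset.mem_compl.mpr hjS
    by_cases hjp1 : j + 1 ∈ S
    · -- case B1 : j ∉ S, j+1 ∈ S
      have hjp1c : j + 1 ∉ Sᶜ := fun h => (Finset.mem_compl.mp h) hjp1
      rw [mw, Einc hSu hjS, Hdec hSc hjp1c, show j + 1 - 1 = j by ring,
        eL_head (j + 1) S hn2, eL_one, if_pos hjp1, hL_head j Sᶜ hn2, hL_one,
        if_pos hjSc, ← P_append, ← P_cons]
      refine sandwich' j _ [] [] [j + 1] (eL (j + 1 + 1) S (n - 2))
        (hL (j - 1) Sᶜ (n - 2)) ?_ (Or.inr ⟨_, rfl⟩) ?_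
      · simp [List.append_assoc]
      · rintro c (hc | hc)
        · simp at hc
        · obtain ⟨hcS, t, ht, rfl⟩ := eL_mem hc
          rw [show j + 1 + 1 + (t : Fin n) = j + ((2 + t : ℕ) : Fin n) by push_cast; ring]
          by_cases h2t : 2 + t = n - 1
          · exfalso
            have heq : j + 1 + 1 + (t : Fin n) = j - 1 := by
              rw [show j + 1 + 1 + (t : Fin n) = j + ((2 + t : ℕ) : Fin n) by
                push_cast; ring, h2t, Nat.cast_sub (by omega : 1 ≤ n), natCast_n]
              ring
            exact hj1S (heq ▸ hcS)
          · exact acomm0 j (by omega) (by omega)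
    · -- case B2 : j ∉ S, j-1 ∉ S, j+1 ∉ S
      have hjp1c : j + 1 ∈ Sᶜ := Finset.mem_compl.mpr hjp1
      obtain ⟨q, hqn, hall', htop'⟩ := exists_top hSc hjSc
      have hq1 : 1 ≤ q := by
        by_contra h
        have hq0 : q = 0 := by omega
        rw [hq0] at htop'
        simp only [Nat.cast_zero, add_zero] at htop'
        exact htop' hjp1c
      rw [mw, Hdec hSc htop', show j + (q : Fin n) + 1 - 1 = j + (q : Fin n) by ring]
      have hH := hL_split (j + (q : Fin n)) Sᶜ (q + 1) (n - 2 - q)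
      rw [show q + 1 + (n - 2 - q) = n - 1 by omega,
        show ((q + 1 : ℕ) : Fin n) = (q : Fin n) + 1 by push_cast; ring,
        show j + (q : Fin n) - ((q : Fin n) + 1) = j - 1 by ring] at hH
      have hRh : hL (j + (q : Fin n)) Sᶜ (q + 1)
          = (List.range (q + 1)).map (fun t : ℕ => j + (q : Fin n) - (t : Fin n)) := by
        apply hL_full
        intro t ht
        rw [show j + (q : Fin n) - (t : Fin n) = j + ((q - t : ℕ) : Fin n) by
          rw [Nat.cast_sub (by omega : t ≤ q)]; ring]
        exact hall' _ (by omega)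
      have hdec : (List.range (q + 1)).map (fun t : ℕ => j + (q : Fin n) - (t : Fin n))
          = ((List.range (q - 1)).map (fun t : ℕ => j + (q : Fin n) - (t : Fin n))
            ++ [j + (q : Fin n) - ((q - 1 : ℕ) : Fin n)]) ++ [j] := by
        rw [show q + 1 = (q - 1) + 1 + 1 by omega, List.range_succ, List.map_append,
          List.range_succ, List.map_append]
        simp only [List.map_cons, List.map_nil]
        rw [show q - 1 + 1 = q by omega, show j + (q : Fin n) - (q : Fin n) = j by ring]
      rw [hH, hRh, hdec, ← P_append, ← P_cons]
      refine sandwich' j _ []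
        (incWord n S ++ (List.range (q - 1)).map (fun t : ℕ => j + (q : Fin n) - (t : Fin n)))
        [j + (q : Fin n) - ((q - 1 : ℕ) : Fin n)] []
        (hL (j - 1) Sᶜ (n - 2 - q)) ?_ (Or.inr ⟨_, rfl⟩) ?_
      · simp [List.append_assoc]
      · rintro c (hc | hc)
        · rcases List.mem_append.mp hc with hc' | hc'
          · exact acomm_mem (incWord_mem hc') hj1S hjp1
          · obtain ⟨t, ht, rfl⟩ := List.mem_map.mp hc'
            rw [List.mem_range] at ht
            rw [show j + (q : Fin n) - (t : Fin n) = j + ((q - t : ℕ) : Fin n) by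
              rw [Nat.cast_sub (by omega : t ≤ q)]; ring]
            exact acomm0 j (by omega) (by omega)
        · simp at hc

/-- right vanishing: `m(S) · a j = 0` unless `j ∈ S` and `j - 1 ∉ S`. -/
lemma right_zero {S : Finset (Fin n)} (hSu : S ≠ Finset.univ) (hSc : Sᶜ ≠ Finset.univ)
    {j : Fin n} (hj : ¬(j ∈ S ∧ j - 1 ∉ S)) :
    mw S * a n j = 0 := by
  have hn2 : 2 ≤ n := hn2_of hSu hSc
  by_cases hjS : j ∈ S
  · -- j ∈ S and j - 1 ∈ S
    have hj1S : j - 1 ∈ S := by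
      by_contra h
      exact hj ⟨hjS, h⟩
    by_cases hjp1 : j + 1 ∈ S
    · -- run of j in S goes up at least one step
      obtain ⟨p, hpn, hall, htop⟩ := exists_top hSu hjS
      have hp1 : 1 ≤ p := by
        by_contra h
        have hp0 : p = 0 := by omega
        rw [hp0] at htop
        simp only [Nat.cast_zero, add_zero] at htop
        exact htop hjp1
      rw [mw, Einc hSu htop]
      have hcast1 : ((n - 2 - p : ℕ) : Fin n) = -2 - (p : Fin n) := by
        rw [Nat.cast_sub (by omega : p ≤ n - 2), Nat.cast_sub (by omega : 2 ≤ n), natCast_n]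
        ring
      have hE := eL_split (j + (p : Fin n) + 1 + 1) S (n - 2 - p) (p + 1)
      rw [show n - 2 - p + (p + 1) = n - 1 by omega, hcast1,
        show j + (p : Fin n) + 1 + 1 + (-2 - (p : Fin n)) = j by ring] at hE
      have hR : eL j S (p + 1) = (List.range (p + 1)).map (fun t : ℕ => j + (t : Fin n)) :=
        eL_full _ _ _ (fun t ht => hall t (by omega))
      have hdec : (List.range (p + 1)).map (fun t : ℕ => j + (t : Fin n))
          = ([j] ++ [j + ((1 : ℕ) : Fin n)])
            ++ (List.range (p - 1)).map (fun t : ℕ => j + ((2 + t : ℕ) : Fin n)) := by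
        rw [show p + 1 = 2 + (p - 1) by omega, List.range_add, List.map_append,
          List.map_map, show List.range 2 = [0, 1] from rfl]
        simp only [List.map_cons, List.map_nil]
        rw [show j + ((0 : ℕ) : Fin n) = j by simp]
        rfl
      rw [hE, hR, hdec, ← P_singleton j, ← P_append, ← P_append]
      refine sandwich' j _ (eL (j + (p : Fin n) + 1 + 1) S (n - 2 - p)) []
        [j + ((1 : ℕ) : Fin n)]
        ((List.range (p - 1)).map (fun t : ℕ => j + ((2 + t : ℕ) : Fin n)) ++ decWord n Sᶜ)
        [] ?_ (Or.inr ⟨_, rfl⟩) ?_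
      · simp [List.append_assoc]
      · rintro c (hc | hc)
        · simp at hc
        · rcases List.mem_append.mp hc with hc' | hc'
          · obtain ⟨t, ht, rfl⟩ := List.mem_map.mp hc'
            rw [List.mem_range] at ht
            exact acomm0 j (by omega) (by omega)
          · refine acomm_mem (decWord_mem hc') ?_ ?_
            · exact fun h => (Finset.mem_compl.mp h) hj1S
            · exact fun h => (Finset.mem_compl.mp h) hjp1
    · -- j + 1 ∉ S
      have hjp1c : j + 1 ∈ Sᶜ := Finset.mem_compl.mpr hjp1
      have hjc : j ∉ Sᶜ := fun h => (Finset.mem_compl.mp h) hjS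
      rw [mw, Einc hSu hjp1, Hdec hSc hjc, eL_snoc (j + 1 + 1) S hn2,
        show j + 1 + 1 - 2 = j by ring, eL_one, if_pos hjS,
        hL_snoc (j - 1) Sᶜ hn2, show j - 1 + 2 = j + 1 by ring, hL_one, if_pos hjp1c,
        ← P_singleton j, ← P_append, ← P_append]
      refine sandwich' j _ (eL (j + 1 + 1) S (n - 2)) (hL (j - 1) Sᶜ (n - 2))
        [j + 1] [] [] ?_ (Or.inr ⟨_, rfl⟩) ?_
      · simp [List.append_assoc]
      · rintro c (hc | hc)
        · obtain ⟨hcSc, t, ht, rfl⟩ := hL_mem hc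
          by_cases ht0 : t = 0
          · exfalso
            have heq : (j - 1) - (t : Fin n) = j - 1 := by
              rw [ht0]; simp
            exact (Finset.mem_compl.mp (heq ▸ hcSc)) hj1S
          · rw [show (j - 1) - (t : Fin n) = j - ((1 + t : ℕ) : Fin n) by push_cast; ring]
            exact acomm0sub j (by omega) (by omega)
        · simp at hc
  · -- j ∉ S : already H(Sᶜ) · a j = 0
    have hjSc : j ∈ Sᶜ := Finset.mem_compl.mpr hjS
    have key : P (decWord n Sᶜ) * a n j = 0 := by
      obtain ⟨q, hqn, hall', hbot'⟩ := exists_bot hSc hjSc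
      rw [Hdec hSc hbot', show j - (q : Fin n) - 1 - 1 = j - (q : Fin n) - 2 by ring]
      have hcast1 : ((n - 2 - q : ℕ) : Fin n) = -2 - (q : Fin n) := by
        rw [Nat.cast_sub (by omega : q ≤ n - 2), Nat.cast_sub (by omega : 2 ≤ n), natCast_n]
        ring
      have hH := hL_split (j - (q : Fin n) - 2) Sᶜ (n - 2 - q) (q + 1)
      rw [show n - 2 - q + (q + 1) = n - 1 by omega, hcast1,
        show j - (q : Fin n) - 2 - (-2 - (q : Fin n)) = j by ring] at hH
      have hRh : hL j Sᶜ (q + 1) = (List.range (q + 1)).map (fun t : ℕ => j - (t : Fin n)) :=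
        hL_full _ _ _ (fun t ht => hall' t (by omega))
      rw [hH, hRh, ← P_singleton j, ← P_append]
      by_cases hq0 : q = 0
      · subst hq0
        refine sandwich' j _ (hL (j - (0 : ℕ) - 2) Sᶜ (n - 2 - 0)) [] [] [] []
          ?_ (Or.inl rfl) ?_
        · rw [show List.range (0 + 1) = [0] from rfl]
          simp [List.append_assoc]
        · rintro c (hc | hc) <;> simp at hc
      · have hdec : (List.range (q + 1)).map (fun t : ℕ => j - (t : Fin n))
            = ([j] ++ [j - ((1 : ℕ) : Fin n)])
              ++ (List.range (q - 1)).map (fun t : ℕ => j - ((2 + t : ℕ) : Fin n)) := by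
          rw [show q + 1 = 2 + (q - 1) by omega, List.range_add, List.map_append,
            List.map_map, show List.range 2 = [0, 1] from rfl]
          simp only [List.map_cons, List.map_nil]
          rw [show j - ((0 : ℕ) : Fin n) = j by simp]
          rfl
        rw [hdec]
        refine sandwich' j _ (hL (j - (q : Fin n) - 2) Sᶜ (n - 2 - q)) []
          [j - ((1 : ℕ) : Fin n)]
          ((List.range (q - 1)).map (fun t : ℕ => j - ((2 + t : ℕ) : Fin n)))
          [] ?_ (Or.inr ⟨_, rfl⟩) ?_
        · simp [List.append_assoc]
        · rintro c (hc | hc)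
          · simp at hc
          · obtain ⟨t, ht, rfl⟩ := List.mem_map.mp hc
            rw [List.mem_range] at ht
            exact acomm0sub j (by omega) (by omega)
    rw [mw, mul_assoc, key, mul_zero]


lemma card_ne_univ {S : Finset (Fin n)} {i : ℕ} (hcard : S.card = i) (hi : i ≤ n - 1)
    (hn : 1 ≤ n) : S ≠ Finset.univ := by
  intro h
  rw [h, Finset.card_univ, Fintype.card_fin] at hcard
  omega

lemma z_eq {i : ℕ} (hi1 : 1 ≤ i) (hi2 : i ≤ n - 1) :
    ee n i * hh n (n - i) = ∑ S ∈ Finset.powersetCard i (Finset.univ : Finset (Fin n)), mw S := by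
  have hn1 : 1 ≤ n := Nat.pos_of_ne_zero (NeZero.ne n)
  rw [ee, hh, Finset.sum_mul_sum]
  apply Finset.sum_congr rfl
  intro S hS
  have hcard : S.card = i := (Finset.mem_powersetCard.mp hS).2
  have hSu : S ≠ Finset.univ := card_ne_univ hcard hi2 hn1
  rw [Finset.sum_eq_single Sᶜ]
  · rfl
  · intro T hT hTne
    have hTcard : T.card = n - i := (Finset.mem_powersetCard.mp hT).2
    have hTu : T ≠ Finset.univ := card_ne_univ hTcard (by omega) hn1
    obtain ⟨x, hxT, hxS⟩ : ∃ x, x ∈ T ∧ x ∈ S := by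
      by_contra h
      push_neg at h
      have hsub : T ⊆ Sᶜ := fun x hx => Finset.mem_compl.mpr (h x hx)
      apply hTne
      apply Finset.eq_of_subset_of_card_le hsub
      rw [Finset.card_compl, Fintype.card_fin, hcard, hTcard]
    exact EH_zero hSu hTu hxS hxT
  · intro h
    exfalso
    apply h
    rw [Finset.mem_powersetCard]
    exact ⟨Finset.subset_univ _, by rw [Finset.card_compl, Fintype.card_fin, hcard]⟩

lemma z_comm_gen {i : ℕ} (hi1 : 1 ≤ i) (hi2 : i ≤ n - 1) (j : Fin n) :
    a n j * (ee n i * hh n (n - i)) = (ee n i * hh n (n - i)) * a n j := by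
  have hn1 : 1 ≤ n := Nat.pos_of_ne_zero (NeZero.ne n)
  rw [z_eq hi1 hi2, Finset.mul_sum, Finset.sum_mul]
  have huniv : ∀ S ∈ Finset.powersetCard i (Finset.univ : Finset (Fin n)),
      S ≠ Finset.univ ∧ Sᶜ ≠ Finset.univ := by
    intro S hS
    have hcard : S.card = i := (Finset.mem_powersetCard.mp hS).2
    refine ⟨card_ne_univ hcard hi2 hn1, ?_⟩
    intro h
    have : S = ∅ := by
      rwa [Finset.compl_eq_univ_iff] at h
    rw [this, Finset.card_empty] at hcard
    omega
  -- restrict both sums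
  rw [show (∑ S ∈ Finset.powersetCard i (Finset.univ : Finset (Fin n)), a n j * mw S)
      = ∑ S ∈ (Finset.powersetCard i (Finset.univ : Finset (Fin n))).filter
          (fun S => j - 1 ∈ S ∧ j ∉ S), a n j * mw S from
    (Finset.sum_subset (Finset.filter_subset _ _) (by
      intro S hS hSf
      have hSu := (huniv S hS).1
      have hSc := (huniv S hS).2
      apply left_zero hSu hSc
      intro hP
      exact hSf (Finset.mem_filter.mpr ⟨hS, hP⟩))).symm]
  rw [show (∑ S ∈ Finset.powersetCard i (Finset.univ : Finset (Fin n)), mw S * a n j)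
      = ∑ S ∈ (Finset.powersetCard i (Finset.univ : Finset (Fin n))).filter
          (fun S => j ∈ S ∧ j - 1 ∉ S), mw S * a n j from
    (Finset.sum_subset (Finset.filter_subset _ _) (by
      intro S hS hSf
      have hSu := (huniv S hS).1
      have hSc := (huniv S hS).2
      apply right_zero hSu hSc
      intro hQ
      exact hSf (Finset.mem_filter.mpr ⟨hS, hQ⟩))).symm]
  -- now the bijection
  refine Finset.sum_nbij' (fun S => insert j (S.erase (j - 1)))
    (fun S => insert (j - 1) (S.erase j)) ?_ ?_ ?_ ?_ ?_
  · intro S hS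
    obtain ⟨hSmem, hj1, hj2⟩ := Finset.mem_filter.mp hS
    have hjj1 : j - 1 ≠ j := fun h => hj2 (by rw [← h]; exact hj1)
    rw [Finset.mem_filter]
    refine ⟨?_, Finset.mem_insert_self _ _, ?_⟩
    · rw [Finset.mem_powersetCard] at hSmem ⊢
      refine ⟨Finset.subset_univ _, ?_⟩
      rw [Finset.card_insert_of_notMem (fun h => hj2 (Finset.mem_of_mem_erase h)),
        Finset.card_erase_of_mem hj1, ← hSmem.2]
      have : 1 ≤ S.card := Finset.card_pos.mpr ⟨_, hj1⟩
      omega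
    · rw [Finset.mem_insert]
      rintro (h | h)
      · exact hjj1 h
      · exact (Finset.mem_erase.mp h).1 rfl
  · intro S hS
    obtain ⟨hSmem, hj1, hj2⟩ := Finset.mem_filter.mp hS
    have hjj1 : j - 1 ≠ j := fun h => hj2 (by rw [h]; exact hj1)
    rw [Finset.mem_filter]
    refine ⟨?_, Finset.mem_insert_self _ _, ?_⟩
    · rw [Finset.mem_powersetCard] at hSmem ⊢
      refine ⟨Finset.subset_univ _, ?_⟩
      rw [Finset.card_insert_of_notMem (fun h => hj2 (Finset.mem_of_mem_erase h)),
        Finset.card_erase_of_mem hj1, ← hSmem.2]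
      have : 1 ≤ S.card := Finset.card_pos.mpr ⟨_, hj1⟩
      omega
    · rw [Finset.mem_insert]
      rintro (h | h)
      · exact hjj1 h.symm
      · exact (Finset.mem_erase.mp h).1 rfl
  · intro S hS
    obtain ⟨hSmem, hj1, hj2⟩ := Finset.mem_filter.mp hS
    have hjj1 : j - 1 ≠ j := fun h => hj2 (by rw [← h]; exact hj1)
    ext z
    simp only [Finset.mem_insert, Finset.mem_erase]
    constructor
    · rintro (h | ⟨hz1, (h | h)⟩)
      · exact h ▸ hj1
      · exact absurd h hz1
      · exact h.2
    · intro hz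
      by_cases hzj1 : z = j - 1
      · exact Or.inl hzj1
      · exact Or.inr ⟨fun h => hj2 (h ▸ hz), Or.inr ⟨hzj1, hz⟩⟩
  · intro S hS
    obtain ⟨hSmem, hj1, hj2⟩ := Finset.mem_filter.mp hS
    have hjj1 : j - 1 ≠ j := fun h => hj2 (by rw [h]; exact hj1)
    ext z
    simp only [Finset.mem_insert, Finset.mem_erase]
    constructor
    · rintro (h | ⟨hz1, (h | h)⟩)
      · exact h ▸ hj1
      · exact absurd h hz1
      · exact h.2
    · intro hz
      by_cases hzj : z = j
      · exact Or.inl hzj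
      · exact Or.inr ⟨fun h => hj2 (h ▸ hz), Or.inr ⟨hzj, hz⟩⟩
  · intro S hS
    obtain ⟨hSmem, hj1, hj2⟩ := Finset.mem_filter.mp hS
    have hSu : S ≠ Finset.univ := (huniv S hSmem).1
    exact comm_step hSu hj1 hj2


/-- in the affine nilTemperley-Lieb algebra `n\widehat{TL}ₙ`, the elements
`zᵢ = ẽᵢⁿ · h̃_{n-i}ⁿ` (for `1 ≤ i ≤ n-1`) are central. -/
theorem stmt12 (n : ℕ) [NeZero n] (i : ℕ) (hi1 : 1 ≤ i) (hi2 : i ≤ n - 1)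
    (x : TL n) :
    (ee n i * hh n (n - i)) * x = x * (ee n i * hh n (n - i)) := by
  obtain ⟨y, rfl⟩ := RingQuot.mkAlgHom_surjective ℤ (TLRel n) x
  refine FreeAlgebra.induction ℤ (Fin n)
    (motive := fun y => (ee n i * hh n (n - i)) * (RingQuot.mkAlgHom ℤ (TLRel n)) y
      = (RingQuot.mkAlgHom ℤ (TLRel n)) y * (ee n i * hh n (n - i))) ?_ ?_ ?_ ?_ y
  · intro r
    rw [AlgHom.commutes]
    exact (Algebra.commutes r (ee n i * hh n (n - i))).symm
  · intro xg
    exact (z_comm_gen hi1 hi2 xg).symm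
  · intro u v hu hv
    rw [map_mul, ← mul_assoc, hu, mul_assoc, hv, mul_assoc]
  · intro u v hu hv
    rw [map_add, mul_add, add_mul, hu, hv]

end NilTL
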